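/- Extremal Theorem, part 2: let τ ∈ ℂ \ {0}, let b be a finite word over {1,…,n} and x a nonempty focal word such that M(τ) ⊆ T_b(T_x(F)). Then M(τ) = {T_b(p_x)}; that is, the point T_b(p_x) is the unique maximizer of the target function of τ over F. -/

import Mathlib

open Complex

noncomputable section

/-- Composition of IFS maps along a finite word: `T_a = T_{a₁} ∘ ⋯ ∘ T_{a_L}`. -/
def wordMap {n : ℕ} (T : Fin n → ℂ → ℂ) : List (Fin n) → ℂ → ℂ
  | [] => id
  | k :: a => T k ∘ wordMap T a

/-- Product of factors along a finite word: `φ_a = φ_{a₁} ⋯ φ_{a_L}`. -/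
def wordFactor {n : ℕ} (φ : Fin n → ℂ) (a : List (Fin n)) : ℂ :=
  (a.map φ).prod

/-- `e` is an extremal point of `S`: it belongs to `S` and does not lie in the open
segment between any two distinct points of `S`. -/
def IsExtremal (S : Set ℂ) (e : ℂ) : Prop :=
  e ∈ S ∧ ¬ ∃ s₁ s₂ : ℂ, s₁ ∈ S ∧ s₂ ∈ S ∧ s₁ ≠ s₂ ∧
    ∃ t : ℝ, 0 < t ∧ t < 1 ∧ e = t • s₁ + (1 - t) • s₂

/-- The set of maximizers of the target function `z ↦ ⟨τ,z⟩ = Re(conj τ · z)` over `F`. -/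
def maxSet (F : Set ℂ) (τ : ℂ) : Set ℂ :=
  {z | z ∈ F ∧ ∀ w ∈ F, ((starRingEnd ℂ) τ * w).re ≤ ((starRingEnd ℂ) τ * z).re}


lemma wordFactor_cons {n : ℕ} (φ : Fin n → ℂ) (k : Fin n) (a : List (Fin n)) :
    wordFactor φ (k :: a) = φ k * wordFactor φ a := by
  simp [wordFactor]

lemma wordMap_sub {n : ℕ} {p φ : Fin n → ℂ} {T : Fin n → ℂ → ℂ}
    (hT : ∀ k z, T k z = p k + φ k * (z - p k)) (a : List (Fin n)) (z w : ℂ) :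
    wordMap T a z - wordMap T a w = wordFactor φ a * (z - w) := by
  induction a with
  | nil => simp [wordMap, wordFactor]
  | cons k a ih =>
    simp only [wordMap, Function.comp_apply, hT, wordFactor_cons]
    rw [show p k + φ k * (wordMap T a z - p k) - (p k + φ k * (wordMap T a w - p k))
        = φ k * (wordMap T a z - wordMap T a w) by ring, ih]
    ring

lemma wordMap_mem {n : ℕ} {T : Fin n → ℂ → ℂ} {F : Set ℂ}
    (hFinv : F = ⋃ k, T k '' F) (a : List (Fin n)) {z : ℂ} (hz : z ∈ F) :
    wordMap T a z ∈ F := by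
  induction a with
  | nil => exact hz
  | cons k a ih =>
    have : T k (wordMap T a z) ∈ ⋃ k, T k '' F := Set.mem_iUnion.2 ⟨k, ⟨_, ih, rfl⟩⟩
    rw [hFinv]
    exact this

lemma wordFactor_abs_le_one {n : ℕ} {φ : Fin n → ℂ}
    (hφ : ∀ k, 0 < ‖φ k‖ ∧ ‖φ k‖ < 1) (a : List (Fin n)) :
    ‖wordFactor φ a‖ ≤ 1 := by
  induction a with
  | nil => simp [wordFactor]
  | cons k a ih =>
    rw [wordFactor_cons, norm_mul]
    calc ‖φ k‖ * ‖wordFactor φ a‖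
        ≤ 1 * 1 := mul_le_mul (hφ k).2.le ih (by positivity) zero_le_one
      _ = 1 := by ring

lemma wordFactor_abs_lt_one {n : ℕ} {φ : Fin n → ℂ}
    (hφ : ∀ k, 0 < ‖φ k‖ ∧ ‖φ k‖ < 1)
    (a : List (Fin n)) (ha : a ≠ []) :
    ‖wordFactor φ a‖ < 1 := by
  cases a with
  | nil => exact absurd rfl ha
  | cons k a =>
    rw [wordFactor_cons, norm_mul]
    calc ‖φ k‖ * ‖wordFactor φ a‖
        ≤ ‖φ k‖ * 1 :=
          mul_le_mul_of_nonneg_left (wordFactor_abs_le_one hφ a) (by positivity)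
      _ = ‖φ k‖ := mul_one _
      _ < 1 := (hφ k).2

/-- Extremal Theorem, part 2: if `M(τ) ⊆ T_b(T_x(F))` with `x` a nonempty
focal word, then `M(τ) = {T_b(p_x)}`. -/
theorem extremal_theorem_part2 {n : ℕ} (hn : 1 ≤ n) (p φ : Fin n → ℂ)
    (hφ : ∀ k, 0 < ‖φ k‖ ∧ ‖φ k‖ < 1)
    (T : Fin n → ℂ → ℂ) (hT : ∀ k z, T k z = p k + φ k * (z - p k))
    (F : Set ℂ) (hFne : F.Nonempty) (hFc : IsCompact F)
    (hFinv : F = ⋃ k, T k '' F)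
    (τ : ℂ) (hτ : τ ≠ 0)
    (b x : List (Fin n)) (hx : x ≠ [])
    (hfoc : ∃ r : ℝ, 0 < r ∧ wordFactor φ x = (r : ℂ))
    (px : ℂ) (hpx : wordMap T x px = px)
    (hMbx : maxSet F τ ⊆ wordMap T b '' (wordMap T x '' F)) :
    maxSet F τ = {wordMap T b px} := by
  obtain ⟨r, hr0, hrx⟩ := hfoc
  have habs : ‖wordFactor φ x‖ < 1 := wordFactor_abs_lt_one hφ x hx
  have hr1 : r < 1 := by
    have h : ‖((r : ℂ))‖ = r := by rw [Complex.norm_real, Real.norm_eq_abs, abs_of_pos hr0]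
    rw [hrx, h] at habs
    exact habs
  -- px ∈ F
  have hpxF : px ∈ F := by
    obtain ⟨y, hy⟩ := hFne
    have hiter : ∀ k, (wordMap T x)^[k] y ∈ F := by
      intro k
      induction k with
      | zero => exact hy
      | succ k ih => rw [Function.iterate_succ_apply']; exact wordMap_mem hFinv x ih
    have hdiff : ∀ k, (wordMap T x)^[k] y - px = (wordFactor φ x) ^ k * (y - px) := by
      intro k
      induction k with
      | zero => simp
      | succ k ih =>
        rw [Function.iterate_succ_apply']
        calc wordMap T x ((wordMap T x)^[k] y) - px
            = wordMap T x ((wordMap T x)^[k] y) - wordMap T x px := by rw [hpx]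
          _ = wordFactor φ x * ((wordMap T x)^[k] y - px) := wordMap_sub hT x _ _
          _ = (wordFactor φ x) ^ (k + 1) * (y - px) := by rw [ih]; ring
    have h0 : Filter.Tendsto (fun k => (wordFactor φ x) ^ k * (y - px))
        Filter.atTop (nhds 0) := by
      simpa using
        (tendsto_pow_atTop_nhds_zero_of_norm_lt_one
          (by simpa using habs)).mul_const (y - px)
    have h1 : Filter.Tendsto (fun k => (wordMap T x)^[k] y - px) Filter.atTop (nhds 0) := by
      simp only [hdiff]; exact h0
    have h2 := h1.add_const px
    simp only [sub_add_cancel, zero_add] at h2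
    exact hFc.isClosed.mem_of_tendsto h2 (Filter.Eventually.of_forall hiter)
  set q := wordMap T b px with hq
  have hqF : q ∈ F := wordMap_mem hFinv b hpxF
  -- maxSet nonempty
  have hcont : Continuous fun z : ℂ => ((starRingEnd ℂ) τ * z).re :=
    Complex.continuous_re.comp (continuous_const.mul continuous_id)
  obtain ⟨z₀, hz₀F, hz₀max⟩ := hFc.exists_isMaxOn hFne hcont.continuousOn
  have hz₀ : z₀ ∈ maxSet F τ := ⟨hz₀F, fun w hw => hz₀max hw⟩
  -- key step
  have key : ∀ y ∈ maxSet F τ, ∃ y' ∈ maxSet F τ, (r : ℂ) * (y' - q) = y - q := by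
    intro y hy
    obtain ⟨u, ⟨w, hwF, rfl⟩, rfl⟩ := hMbx hy
    set y := wordMap T b (wordMap T x w) with hyd
    set y' := wordMap T b w with hy'd
    have hy'F : y' ∈ F := wordMap_mem hFinv b hwF
    have hy'q : y' - q = wordFactor φ b * (w - px) := wordMap_sub hT b w px
    have hyq : y - q = (r : ℂ) * (y' - q) := by
      calc y - q = wordFactor φ b * (wordMap T x w - px) := wordMap_sub hT b _ _
        _ = wordFactor φ b * (wordMap T x w - wordMap T x px) := by rw [hpx]
        _ = wordFactor φ b * (wordFactor φ x * (w - px)) := by rw [wordMap_sub hT x w px]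
        _ = (r : ℂ) * (wordFactor φ b * (w - px)) := by rw [hrx]; ring
        _ = (r : ℂ) * (y' - q) := by rw [hy'q]
    -- target values
    set u' : ℝ := ((starRingEnd ℂ) τ * (y' - q)).re with hu'
    have hfy : ((starRingEnd ℂ) τ * y).re = ((starRingEnd ℂ) τ * q).re + r * u' := by
      have : (starRingEnd ℂ) τ * y = (starRingEnd ℂ) τ * q + (r : ℂ) * ((starRingEnd ℂ) τ * (y' - q)) := by
        rw [show (starRingEnd ℂ) τ * y = (starRingEnd ℂ) τ * q + (starRingEnd ℂ) τ * (y - q) by ring,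
          hyq]; ring
      rw [this, Complex.add_re, Complex.re_ofReal_mul]
    have hfy' : ((starRingEnd ℂ) τ * y').re = ((starRingEnd ℂ) τ * q).re + u' := by
      rw [show (starRingEnd ℂ) τ * y' = (starRingEnd ℂ) τ * q + (starRingEnd ℂ) τ * (y' - q) by ring,
        Complex.add_re]
    have hqle : ((starRingEnd ℂ) τ * q).re ≤ ((starRingEnd ℂ) τ * y).re := hy.2 q hqF
    have hy'le : ((starRingEnd ℂ) τ * y').re ≤ ((starRingEnd ℂ) τ * y).re := hy.2 y' hy'F
    have hu0 : u' = 0 := by nlinarith [hfy, hfy', hqle, hy'le]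
    have heq : ((starRingEnd ℂ) τ * y').re = ((starRingEnd ℂ) τ * y).re := by
      rw [hfy, hfy', hu0]; ring
    exact ⟨y', ⟨hy'F, fun v hv => (hy.2 v hv).trans heq.ge⟩, hyq.symm⟩
  -- iteration
  have iterlem : ∀ z ∈ maxSet F τ, ∀ k : ℕ,
      ∃ y ∈ maxSet F τ, (r : ℂ) ^ k * (y - q) = z - q := by
    intro z hz k
    induction k with
    | zero => exact ⟨z, hz, by simp⟩
    | succ k ih =>
      obtain ⟨y, hy, hyq⟩ := ih
      obtain ⟨y', hy', hy'q⟩ := key y hy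
      exact ⟨y', hy', by rw [pow_succ, mul_assoc, hy'q, hyq]⟩
  -- bound
  obtain ⟨C, hC⟩ := isBounded_iff_forall_norm_le.mp hFc.isBounded
  have main : ∀ z ∈ maxSet F τ, z = q := by
    intro z hz
    have hble : ∀ k : ℕ, ‖z - q‖ ≤ (C + ‖q‖) * r ^ k := by
      intro k
      obtain ⟨y, hy, hyq⟩ := iterlem z hz k
      calc ‖z - q‖ = ‖(r : ℂ) ^ k * (y - q)‖ := by rw [hyq]
        _ = r ^ k * ‖y - q‖ := by
            rw [norm_mul, norm_pow, Complex.norm_real, Real.norm_eq_abs, abs_of_pos hr0]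
        _ ≤ r ^ k * (C + ‖q‖) := by
            apply mul_le_mul_of_nonneg_left _ (by positivity)
            calc ‖y - q‖ ≤ ‖y‖ + ‖q‖ := norm_sub_le _ _
              _ ≤ C + ‖q‖ := by linarith [hC y hy.1]
        _ = (C + ‖q‖) * r ^ k := mul_comm _ _
    have htend : Filter.Tendsto (fun k : ℕ => (C + ‖q‖) * r ^ k) Filter.atTop (nhds 0) := by
      simpa using (tendsto_pow_atTop_nhds_zero_of_lt_one hr0.le hr1).const_mul (C + ‖q‖)
    have : ‖z - q‖ ≤ 0 := ge_of_tendsto' htend hble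
    have : z - q = 0 := norm_le_zero_iff.mp this
    linear_combination this
  have hz₀q : z₀ = q := main z₀ hz₀
  exact Set.eq_singleton_iff_unique_mem.mpr ⟨hz₀q ▸ hz₀, main⟩
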